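/- Let $w$ be a set and $F \subseteq 2^w$. If $F$ is closed (i.e., $F = \mathrm{cl}(F)$), then every Boolean homomorphism from $\mathbb{B}_{(w,F)}$ to $\{0,1\}$ restricts on the generators to exactly one element of $F$; that is, the map $f \mapsto \hat f$ is a bijection between $F$ and the set of homomorphisms $\mathbb{B}_{(w,F)} \to \{0,1\}$. -/

import Mathlib

variable {α : Type*} [BooleanAlgebra α]

/-- Membership in the Boolean subalgebra generated by `X`. -/
inductive BooleanGen (X : Set α) : α → Prop
  | base {a : α} : a ∈ X → BooleanGen X a
  | bot : BooleanGen X ⊥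
  | top : BooleanGen X ⊤
  | sup {a b : α} : BooleanGen X a → BooleanGen X b → BooleanGen X (a ⊔ b)
  | inf {a b : α} : BooleanGen X a → BooleanGen X b → BooleanGen X (a ⊓ b)
  | compl {a : α} : BooleanGen X a → BooleanGen X aᶜ

/-- The Boolean subalgebra generated by `X`, as a set. -/
def genBA (X : Set α) : Set α := {a | BooleanGen X a}

namespace genBA
variable {X : Set α}

instance : Max ↥(genBA X) := ⟨fun a b => ⟨a.1 ⊔ b.1, BooleanGen.sup a.2 b.2⟩⟩
instance : Min ↥(genBA X) := ⟨fun a b => ⟨a.1 ⊓ b.1, BooleanGen.inf a.2 b.2⟩⟩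
instance : Top ↥(genBA X) := ⟨⟨⊤, BooleanGen.top⟩⟩
instance : Bot ↥(genBA X) := ⟨⟨⊥, BooleanGen.bot⟩⟩
instance : Compl ↥(genBA X) := ⟨fun a => ⟨a.1ᶜ, BooleanGen.compl a.2⟩⟩
instance : SDiff ↥(genBA X) := ⟨fun a b => ⟨a.1 ⊓ b.1ᶜ, BooleanGen.inf a.2 (BooleanGen.compl b.2)⟩⟩
instance : HImp ↥(genBA X) := ⟨fun a b => ⟨a.1ᶜ ⊔ b.1, BooleanGen.sup (BooleanGen.compl a.2) b.2⟩⟩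

lemma coe_sdiff (a b : ↥(genBA X)) : ((a \ b : ↥(genBA X)) : α) = (a : α) \ (b : α) := by
  rw [sdiff_eq]; rfl

lemma coe_himp (a b : ↥(genBA X)) : ((a ⇨ b : ↥(genBA X)) : α) = (a : α) ⇨ (b : α) := by
  rw [himp_eq, sup_comm]; rfl

instance : BooleanAlgebra ↥(genBA X) :=
  Subtype.coe_injective.booleanAlgebra _ Iff.rfl Iff.rfl (fun _ _ => rfl) (fun _ _ => rfl) rfl rfl
    (fun _ => rfl) coe_sdiff coe_himp

end genBA

/-- The generator `x_i` of the algebra `B_(w,F)`, realized as a function on `F`. -/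
def xgen {w : Type*} (F : Set (w → Bool)) (i : w) : ↥F → Bool := fun f => f.1 i

/-- The algebra `B_(w,F)` of Definition 0.C, realized concretely as the Boolean
subalgebra of `F → Bool` generated by the evaluation functions `x_i`. -/
abbrev BwF (w : Type*) (F : Set (w → Bool)) : Set (↥F → Bool) :=
  genBA (Set.range (xgen F))

lemma xgen_mem {w : Type*} {F : Set (w → Bool)} (i : w) : xgen F i ∈ BwF w F :=
  BooleanGen.base ⟨i, rfl⟩

/-- The closure `cl(F)` of a family `F ⊆ 2^w`. -/
def clF {w : Type*} (F : Set (w → Bool)) : Set (w → Bool) :=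
  {g | ∀ u : Finset w, ∃ f ∈ F, ∀ x ∈ u, f x = g x}


/-- Evaluation at a point of `F` is a bounded lattice homomorphism. -/
def evHom {w : Type*} (F : Set (w → Bool)) (g : ↥F) : BoundedLatticeHom ↥(BwF w F) Bool where
  toFun a := a.1 g
  map_sup' _ _ := rfl
  map_inf' _ _ := rfl
  map_top' := rfl
  map_bot' := rfl

/-- If `F` is closed (`cl(F) = F`), then `f ↦ f̂` is a bijection between `F` and the set of
Boolean homomorphisms `B_(w,F) → Bool`: every `f ∈ F` extends to a homomorphism sending each
generator `x_α` to `f α`, and conversely every homomorphism restricts on the generators to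
exactly one element of `F`. -/
theorem hom_bijection_of_closed {w : Type*} (F : Set (w → Bool)) (hcl : clF F = F) :
    (∀ f ∈ F, ∃ φ : BoundedLatticeHom ↥(BwF w F) Bool,
        ∀ α : w, φ ⟨xgen F α, xgen_mem α⟩ = f α) ∧
    (∀ φ : BoundedLatticeHom ↥(BwF w F) Bool,
        ∃! f : w → Bool, f ∈ F ∧ ∀ α : w, φ ⟨xgen F α, xgen_mem α⟩ = f α) := by
  constructor
  · intro f hf
    exact ⟨evHom F ⟨f, hf⟩, fun α => rfl⟩
  · intro φ
    set f : w → Bool := fun α => φ ⟨xgen F α, xgen_mem α⟩ with hfdef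
    refine ⟨f, ⟨?_, fun α => rfl⟩, fun g hg => funext fun α => (hg.2 α).symm⟩
    rw [← hcl]
    intro u
    set e : w → ↥(BwF w F) := fun α => ⟨xgen F α, xgen_mem α⟩ with he
    set b : ↥(BwF w F) := u.inf (fun α => if f α then e α else (e α)ᶜ) with hb
    have hfac : ∀ α ∈ u, φ (if f α then e α else (e α)ᶜ) = true := by
      intro α hα
      by_cases h : f α = true
      · rw [if_pos h]; exact h
      · have h' : f α = false := by simpa using h
        rw [if_neg h, map_compl']
        have hc : φ (e α) = false := h'
        simp [hc]
    have hφb : φ b = true := by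
      rw [hb, map_finset_inf]
      exact (Finset.inf_eq_top_iff _ _).mpr hfac
    have hbne : (b : ↥F → Bool) ≠ ⊥ := by
      intro h
      have : b = ⊥ := Subtype.ext h
      rw [this] at hφb
      simp at hφb
    obtain ⟨g, hg⟩ : ∃ g, (b : ↥F → Bool) g = true := by
      by_contra hc
      push_neg at hc
      exact hbne (funext fun g => by simpa using hc g)
    have hevb : evHom F g b = true := hg
    have hev : ∀ α ∈ u, evHom F g (if f α then e α else (e α)ᶜ) = true := by
      intro α hα
      have := hevb
      rw [hb, map_finset_inf] at this
      exact (Finset.inf_eq_top_iff _ _).mp this α hα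
    refine ⟨g.1, g.2, fun α hα => ?_⟩
    have h := hev α hα
    by_cases hfa : f α = true
    · rw [hfa]
      simpa [hfa, he, evHom, xgen] using h
    · have h' : f α = false := by simpa using hfa
      rw [h']
      rw [h', if_neg (by simp)] at h
      have : (g.1 α)ᶜ = true := by
        simpa [map_compl', evHom, he, xgen] using h
      simpa using this
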